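/- Let n ≥ 1 be an integer and let q : (0,1) → ℝ be a continuously differentiable solution of (1/n) q' + q² + q/(ny) + 1 - 1/y² = 0 with q(y) = 1/y + O(1) as y → 0⁺. Then q(y) > √(1-y²)/y for all y ∈ (0,1). -/

import Mathlib

set_option maxHeartbeats 800000
open Asymptotics Filter Set

lemma sqrtDeriv {y : ℝ} (hy0 : 0 < y) (hy1 : y < 1) :
    HasDerivAt (fun t => Real.sqrt (1 - t^2) / t)
      (-(1 / (Real.sqrt (1 - y^2) * y^2))) y := by
  have h1 : (0:ℝ) < 1 - y^2 := by nlinarith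
  have hs : 0 < Real.sqrt (1 - y^2) := Real.sqrt_pos.2 h1
  have h2 : HasDerivAt (fun t : ℝ => 1 - t^2) (-(2*y)) y := by
    simpa using ((hasDerivAt_pow 2 y).const_sub 1)
  have h3 : HasDerivAt (fun t => Real.sqrt (1 - t^2))
      (1 / (2 * Real.sqrt (1 - y^2)) * (-(2*y))) y :=
    (Real.hasDerivAt_sqrt h1.ne').comp y h2
  have h4 := h3.div (hasDerivAt_id y) hy0.ne'
  refine h4.congr_deriv ?_
  simp only [id]
  have hsq : Real.sqrt (1-y^2) ^ 2 = 1 - y^2 := Real.sq_sqrt h1.le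
  field_simp
  linear_combination (-1) * hsq

lemma riccati_key (n : ℕ) (hn : 1 ≤ n) (q q' : ℝ → ℝ)
    (hq : ∀ y ∈ Set.Ioo (0:ℝ) 1, HasDerivAt q (q' y) y)
    (hode : ∀ y ∈ Set.Ioo (0:ℝ) 1,
      (1 / (n : ℝ)) * q' y + q y ^ 2 + q y / ((n : ℝ) * y) + 1 - 1 / y ^ 2 = 0)
    (hasym : (fun y => q y - 1 / y) =O[nhdsWithin 0 (Set.Ioi 0)] (fun _ => (1:ℝ)))
    (σ : ℝ) (hσ0 : 0 < σ) (hσ1 : σ < 1) :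
    ∀ y ∈ Set.Ioo (0:ℝ) 1, σ * (Real.sqrt (1 - y^2) / y) < q y := by
  have hn' : (0:ℝ) < (n:ℝ) := by exact_mod_cast hn
  intro y₀ hy₀
  by_contra hcon
  push_neg at hcon
  obtain ⟨C, hC⟩ := hasym.bound
  rw [eventually_nhdsWithin_iff] at hC
  obtain ⟨δ, hδ0, hδ⟩ := Metric.eventually_nhds_iff.mp hC
  set C' : ℝ := max C 1 with hC'def
  have hC'pos : (0:ℝ) < C' := lt_of_lt_of_le one_pos (le_max_right _ _)
  have hnear : ∀ y : ℝ, 0 < y → y < δ → y < (1-σ)/C' →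
      σ * (Real.sqrt (1 - y^2) / y) < q y := by
    intro y hy hyδ hyC
    have hb : |q y - 1/y| ≤ C := by
      have := hδ (show dist y 0 < δ by simpa [Real.dist_eq, abs_of_pos hy])
        (Set.mem_Ioi.2 hy)
      simpa using this
    have h1 : 1/y - C ≤ q y := by linarith [(abs_le.mp hb).1]
    have hs1 : Real.sqrt (1 - y^2) ≤ 1 := Real.sqrt_le_one.2 (by nlinarith)
    have h2 : σ * (Real.sqrt (1 - y^2) / y) ≤ σ / y := by
      rw [mul_div_assoc']
      exact (div_le_div_iff_of_pos_right hy).2 (by nlinarith)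
    have h3 : σ / y < 1/y - C := by
      have hcy : C * y < 1 - σ := by
        have ha : C * y ≤ C' * y := mul_le_mul_of_nonneg_right (le_max_left _ _) hy.le
        have hb2 : C' * y < 1 - σ := by
          rw [lt_div_iff₀ hC'pos] at hyC; linarith [mul_comm C' y]
        linarith
      have e : 1/y - C - σ/y = (1 - σ - C*y)/y := by field_simp; ring
      have : 0 < (1 - σ - C*y)/y := div_pos (by linarith) hy
      linarith [e ▸ this]
    linarith
  -- setup
  set g : ℝ → ℝ := fun y => q y - σ * (Real.sqrt (1 - y^2) / y) with hgdef
  have hgd : ∀ y ∈ Set.Ioo (0:ℝ) 1,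
      HasDerivAt g (q' y + σ / (Real.sqrt (1 - y^2) * y^2)) y := by
    intro y hy
    have := (hq y hy).sub (((sqrtDeriv hy.1 hy.2)).const_mul σ)
    refine this.congr_deriv ?_
    ring
  set ε₀ := min δ ((1-σ)/C') with hε₀def
  have hε₀pos : 0 < ε₀ := lt_min hδ0 (div_pos (by linarith) hC'pos)
  set a := min (ε₀/2) (y₀/2) with hadef
  have ha0 : 0 < a := lt_min (by linarith) (by linarith [hy₀.1])
  have hay₀ : a < y₀ := (min_le_right _ _).trans_lt (by linarith [hy₀.1])
  have hsub : Set.Icc a y₀ ⊆ Set.Ioo (0:ℝ) 1 := fun z hz =>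
    ⟨lt_of_lt_of_le ha0 hz.1, lt_of_le_of_lt hz.2 hy₀.2⟩
  have hga : 0 < g a := by
    have haε : a < ε₀ := (min_le_left _ _).trans_lt (by linarith)
    have h := hnear a ha0 (haε.trans_le (min_le_left _ _)) (haε.trans_le (min_le_right _ _))
    simpa [hgdef] using sub_pos.2 h
  have hgcont : ∀ z ∈ Set.Icc a y₀, ContinuousAt g z := fun z hz =>
    (hgd z (hsub hz)).continuousAt
  set S := Set.Icc a y₀ ∩ g ⁻¹' Set.Iic 0 with hSdef
  have hScl : IsClosed S := by
    apply ContinuousOn.preimage_isClosed_of_isClosed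
      (fun z hz => (hgcont z hz).continuousWithinAt) isClosed_Icc isClosed_Iic
  have hSne : S.Nonempty := ⟨y₀, ⟨hay₀.le, le_refl _⟩, by
    simpa [hgdef] using sub_nonpos.2 hcon⟩
  have hSbdd : BddBelow S := ⟨a, fun z hz => hz.1.1⟩
  set c := sInf S with hcdef
  have hcS : c ∈ S := hScl.csInf_mem hSne hSbdd
  have hcIcc : c ∈ Set.Icc a y₀ := hcS.1
  have hgc : g c ≤ 0 := hcS.2
  have hlt : ∀ z, a ≤ z → z < c → 0 < g z := by
    intro z h1 h2
    by_contra h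
    push_neg at h
    have hzS : z ∈ S := ⟨⟨h1, (h2.trans_le hcIcc.2).le⟩, h⟩
    exact absurd (csInf_le hSbdd hzS) (not_le.2 h2)
  have hac : a < c := by
    rcases lt_or_eq_of_le hcIcc.1 with h | h
    · exact h
    · exfalso; rw [← h] at hgc; linarith
  have hcIoo : c ∈ Set.Ioo (0:ℝ) 1 := hsub hcIcc
  -- g c = 0
  have hgc0 : g c = 0 := by
    refine le_antisymm hgc ?_
    have htend : Tendsto g (nhdsWithin c (Set.Iio c)) (nhds (g c)) :=
      ((hgcont c hcIcc).tendsto).mono_left nhdsWithin_le_nhds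
    refine ge_of_tendsto htend ?_
    have h1 : ∀ᶠ z in nhdsWithin c (Set.Iio c), a < z :=
      eventually_nhdsWithin_of_eventually_nhds (eventually_gt_nhds hac)
    have h2 : ∀ᶠ z in nhdsWithin c (Set.Iio c), z ∈ Set.Iio c :=
      eventually_mem_nhdsWithin
    filter_upwards [h1, h2] with z hz1 hz2
    exact (hlt z hz1.le hz2).le
  have hqc : q c = σ * (Real.sqrt (1 - c^2) / c) := by
    have := hgc0
    simp only [hgdef] at this
    linarith
  -- derivative of g at c is positive
  set s := Real.sqrt (1 - c^2) with hsdef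
  have hs2 : s^2 = 1 - c^2 := Real.sq_sqrt (by nlinarith [hcIoo.1, hcIoo.2])
  have hspos : 0 < s := Real.sqrt_pos.2 (by nlinarith [hcIoo.1, hcIoo.2])
  have hgdpos : 0 < q' c + σ / (s * c^2) := by
    have h := hode c hcIoo
    rw [hqc] at h
    have hc0 : c ≠ 0 := hcIoo.1.ne'
    have hn0 : (n:ℝ) ≠ 0 := hn'.ne'
    have hfin : 0 < q' c * (s * c^2) + σ := by
      field_simp at h
      have hnc : (n:ℝ)*c^4 ≠ 0 := by positivity
      have e0 : q' c * c^2 + (n:ℝ)*σ^2*s^2 + σ*s + (n:ℝ)*c^2 - (n:ℝ) = 0 := by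
        have hmul : (n:ℝ)*c^4 * (q' c * c^2 + (n:ℝ)*σ^2*s^2 + σ*s + (n:ℝ)*c^2 - (n:ℝ)) = 0 := by
          linear_combination ((n:ℝ)*c^4) * h
        exact (mul_eq_zero.mp hmul).resolve_left hnc
      have e : q' c * (s * c^2) + σ = (n:ℝ)*s*(1-σ^2)*(1-c^2) + σ*c^2 := by
        linear_combination s * e0 + (-σ - (n:ℝ)*σ^2*s) * hs2
      rw [e]
      have : 0 < (n:ℝ)*s*(1-σ^2)*(1-c^2) := by
        apply mul_pos (mul_pos (mul_pos hn' hspos) (by nlinarith)) (by nlinarith [hcIoo.2, hcIoo.1])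
      nlinarith [sq_nonneg c, hcIoo.1]
    have e2 : q' c + σ / (s * c^2) = (q' c * (s * c^2) + σ) / (s * c^2) := by
      field_simp
    rw [e2]
    exact div_pos hfin (by positivity)
  -- contradiction via slope
  have hder : HasDerivAt g (q' c + σ / (s * c^2)) c := hgd c hcIoo
  have hslope : Tendsto (slope g c) (nhdsWithin c {c}ᶜ) (nhds (q' c + σ / (s * c^2))) :=
    hasDerivAt_iff_tendsto_slope.mp hder
  have h1 : ∀ᶠ z in nhdsWithin c {c}ᶜ, 0 < slope g c z :=
    hslope.eventually (eventually_gt_nhds hgdpos)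
  have h2 : ∀ᶠ z in nhdsWithin c (Set.Iio c), 0 < slope g c z :=
    h1.filter_mono (nhdsWithin_mono _ fun z hz => ne_of_lt hz)
  have h3 : ∀ᶠ z in nhdsWithin c (Set.Iio c), a < z :=
    eventually_nhdsWithin_of_eventually_nhds (eventually_gt_nhds hac)
  have h4 : ∀ᶠ z in nhdsWithin c (Set.Iio c), z ∈ Set.Iio c := eventually_mem_nhdsWithin
  obtain ⟨z, hz1, hz2, hz3⟩ := (h2.and (h3.and h4)).exists
  have hzc : z < c := hz3
  have hgz : 0 < g z := hlt z hz2.le hzc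
  rw [slope_def_field] at hz1
  have : g z - g c < 0 := by
    by_contra hcontra
    push_neg at hcontra
    have : (g z - g c) / (z - c) ≤ 0 :=
      div_nonpos_of_nonneg_of_nonpos hcontra (by linarith)
    linarith
  linarith


theorem riccati_comparison_J (n : ℕ) (hn : 1 ≤ n) (q q' : ℝ → ℝ)
    (hq : ∀ y ∈ Set.Ioo (0:ℝ) 1, HasDerivAt q (q' y) y)
    (hq'cont : ContinuousOn q' (Set.Ioo 0 1))
    (hode : ∀ y ∈ Set.Ioo (0:ℝ) 1,
      (1 / (n : ℝ)) * q' y + q y ^ 2 + q y / ((n : ℝ) * y) + 1 - 1 / y ^ 2 = 0)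
    (hasym : (fun y => q y - 1 / y) =O[nhdsWithin 0 (Set.Ioi 0)] (fun _ => (1:ℝ))) :
    ∀ y ∈ Set.Ioo (0:ℝ) 1, Real.sqrt (1 - y ^ 2) / y < q y := by
  have hn' : (0:ℝ) < (n:ℝ) := by exact_mod_cast hn
  have key := fun (σ : ℝ) h0 h1 => riccati_key n hn q q' hq hode hasym σ h0 h1
  have hGE : ∀ y ∈ Set.Ioo (0:ℝ) 1, Real.sqrt (1 - y^2) / y ≤ q y := by
    intro y hy
    have hp : 0 < Real.sqrt (1 - y^2) / y :=
      div_pos (Real.sqrt_pos.2 (by nlinarith [hy.1, hy.2])) hy.1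
    by_contra hlt
    push_neg at hlt
    have hq0 : 0 < q y := by
      have := key (1/2) (by norm_num) (by norm_num) y hy
      nlinarith
    have hσ1 : q y / (Real.sqrt (1 - y^2) / y) < 1 := (div_lt_one hp).2 hlt
    have hσ0 : 0 < q y / (Real.sqrt (1 - y^2) / y) := div_pos hq0 hp
    have hk := key _ hσ0 hσ1 y hy
    rw [div_mul_cancel₀ _ hp.ne'] at hk
    exact lt_irrefl _ hk
  intro y hy
  rcases (hGE y hy).lt_or_eq with h | heq
  · exact h
  · exfalso
    set s := Real.sqrt (1 - y^2) with hsdef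
    have hs2 : s^2 = 1 - y^2 := Real.sq_sqrt (by nlinarith [hy.1, hy.2])
    have hspos : 0 < s := Real.sqrt_pos.2 (by nlinarith [hy.1, hy.2])
    have hqy : q y = s / y := heq.symm
    -- local min of f = q - p at y
    set f : ℝ → ℝ := fun t => q t - Real.sqrt (1 - t^2) / t with hfdef
    have hmin : IsLocalMin f y := by
      have hmem : Set.Ioo (0:ℝ) 1 ∈ nhds y := isOpen_Ioo.mem_nhds hy
      filter_upwards [hmem] with z hz
      have h1 := hGE z hz
      have h2 : f y = 0 := by simp only [hfdef]; rw [hqy, ← hsdef, sub_self]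
      show f y ≤ f z
      rw [h2]
      simp only [hfdef]
      exact sub_nonneg.2 h1
    have hfd : HasDerivAt f (q' y + 1 / (s * y^2)) y := by
      have := (hq y hy).sub (sqrtDeriv hy.1 hy.2)
      refine this.congr_deriv ?_
      ring
    have hzero : q' y + 1 / (s * y^2) = 0 := hmin.hasDerivAt_eq_zero hfd
    have h := hode y hy
    rw [hqy] at h
    have hy0 : y ≠ 0 := hy.1.ne'
    have hn0 : (n:ℝ) ≠ 0 := hn'.ne'
    have hq'val : q' y = -(1 / (s * y^2)) := by linarith
    rw [hq'val] at h
    have hs0 : s ≠ 0 := hspos.ne'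
    field_simp at h
    have hs3 : s^3 = s*(1-y^2) := by linear_combination s * hs2
    have hcontr : (n:ℝ)*y^8 = 0 := by
      linear_combination (-(n:ℝ)*y^6) * h + ((n:ℝ)^2*y^6) * hs3 + ((n:ℝ)*y^6) * hs2
    have hpos : (0:ℝ) < (n:ℝ)*y^8 := by positivity
    linarith
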